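/- Every 1/2-derivation of the Virasoro algebra Vir is trivial, i.e., a scalar multiple of the identity map. -/

import Mathlib

/-- The underlying space of the Virasoro algebra, with basis
`L n = single (some n) 1` for `n : ℤ` and central charge `c = single none 1`. -/
abbrev Vir : Type := Option ℤ →₀ ℂ

/-- The Virasoro bracket on basis elements:
`[L m, L n] = (m-n) L (m+n) + ((m³-m)/12) δ_{m+n,0} c`, and `c` is central. -/
noncomputable def virBasic : Option ℤ → Option ℤ → Vir
  | some m, some n =>
      ((m : ℂ) - (n : ℂ)) • Finsupp.single (some (m + n)) (1 : ℂ) +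
      (if m + n = 0 then (((m : ℂ) ^ 3 - (m : ℂ)) / 12) else 0) •
        Finsupp.single (none : Option ℤ) (1 : ℂ)
  | _, _ => 0

/-- The Virasoro Lie bracket, extended bilinearly from basis elements. -/
noncomputable def virBracket (f g : Vir) : Vir :=
  f.sum fun p c => g.sum fun q d => (c * d) • virBasic p q

noncomputable def VirL (n : ℤ) : Vir := Finsupp.single (some n) 1
noncomputable def VirC : Vir := Finsupp.single none 1
noncomputable def veps (m : ℤ) : ℂ := ((m:ℂ)^3 - (m:ℂ))/12

lemma virBasic_none_left (q : Option ℤ) : virBasic none q = 0 := by cases q <;> rfl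
lemma virBasic_none_right (p : Option ℤ) : virBasic p none = 0 := by cases p <;> rfl

lemma virBasic_some_some (m n k : ℤ) :
    virBasic (some m) (some n) (some k) = if m + n = k then ((m:ℂ) - n) else 0 := by
  simp only [virBasic]
  rw [Finsupp.add_apply, Finsupp.smul_apply, Finsupp.smul_apply, Finsupp.single_apply,
    Finsupp.single_apply]
  split_ifs with h1 h2 h2 <;> simp_all

lemma virBasic_some_none (m n : ℤ) :
    virBasic (some m) (some n) none = if m + n = 0 then veps m else 0 := by
  simp only [virBasic]
  rw [Finsupp.add_apply, Finsupp.smul_apply, Finsupp.smul_apply, Finsupp.single_apply,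
    Finsupp.single_apply]
  split_ifs with h1 <;> simp_all [veps]

lemma sum_coeff (v : Vir) (g : Option ℤ → ℂ) (q0 : Option ℤ)
    (h : ∀ q, q ≠ q0 → g q = 0) :
    (v.sum fun q d => d * g q) = v q0 * g q0 :=
  Finsupp.sum_eq_single q0 (fun b _ hb => by rw [h b hb, mul_zero]) (fun _ => zero_mul _)

lemma virBracket_L_left (m : ℤ) (v : Vir) :
    virBracket (VirL m) v = v.sum fun q d => d • virBasic (some m) q := by
  unfold virBracket VirL
  rw [Finsupp.sum_single_index (by simp)]
  simp

lemma virBracket_L_right (n : ℤ) (v : Vir) :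
    virBracket v (VirL n) = v.sum fun p c => c • virBasic p (some n) := by
  unfold virBracket VirL
  exact Finsupp.sum_congr fun p _ => by rw [Finsupp.sum_single_index (by simp), mul_one]

lemma virBracket_C_right (v : Vir) : virBracket v VirC = 0 := by
  unfold virBracket VirC
  have h : ∀ p ∈ v.support,
      ((Finsupp.single (none : Option ℤ) (1:ℂ)).sum fun q d => (v p * d) • virBasic p q)
        = (0 : Vir) := by
    intro p _
    rw [Finsupp.sum_single_index (by simp), virBasic_none_right, smul_zero]
  rw [Finsupp.sum_congr (g2 := fun _ _ => (0:Vir)) h, Finsupp.sum_fun_zero]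

lemma virBracket_C_left (v : Vir) : virBracket VirC v = 0 := by
  unfold virBracket VirC
  rw [Finsupp.sum_single_index (by simp)]
  have h : ∀ q ∈ v.support, ((1:ℂ) * v q) • virBasic none q = (0 : Vir) := by
    intro q _; rw [virBasic_none_left, smul_zero]
  rw [Finsupp.sum_congr (g2 := fun _ _ => (0:Vir)) h, Finsupp.sum_fun_zero]

lemma brL_some (m k : ℤ) (v : Vir) :
    virBracket (VirL m) v (some k) = v (some (k - m)) * ((2*m - k : ℤ) : ℂ) := by
  rw [virBracket_L_left, Finsupp.sum_apply]
  have h1 : (v.sum fun q d => (d • virBasic (some m) q) (some k))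
      = v.sum fun q d => d * (virBasic (some m) q (some k)) := by
    exact Finsupp.sum_congr fun q _ => by rw [Finsupp.smul_apply, smul_eq_mul]
  rw [h1, sum_coeff v _ (some (k - m))]
  · rw [virBasic_some_some]
    have : m + (k - m) = k := by ring
    rw [if_pos this]
    push_cast; ring_nf
  · intro q hq
    match q with
    | none => rw [virBasic_none_right]; rfl
    | some n =>
        rw [virBasic_some_some, if_neg]
        intro hc
        exact hq (by rw [show n = k - m by omega])

lemma brL_none (m : ℤ) (v : Vir) :
    virBracket (VirL m) v none = v (some (-m)) * veps m := by
  rw [virBracket_L_left, Finsupp.sum_apply]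
  have h1 : (v.sum fun q d => (d • virBasic (some m) q) none)
      = v.sum fun q d => d * (virBasic (some m) q none) := by
    exact Finsupp.sum_congr fun q _ => by rw [Finsupp.smul_apply, smul_eq_mul]
  rw [h1, sum_coeff v _ (some (-m))]
  · rw [virBasic_some_none, if_pos (by ring)]
  · intro q hq
    match q with
    | none => rw [virBasic_none_right]; rfl
    | some n =>
        rw [virBasic_some_none, if_neg]
        intro hc
        exact hq (by rw [show n = -m by omega])

lemma brR_some (n k : ℤ) (v : Vir) :
    virBracket v (VirL n) (some k) = v (some (k - n)) * ((k - 2*n : ℤ) : ℂ) := by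
  rw [virBracket_L_right, Finsupp.sum_apply]
  have h1 : (v.sum fun p c => (c • virBasic p (some n)) (some k))
      = v.sum fun p c => c * (virBasic p (some n) (some k)) := by
    exact Finsupp.sum_congr fun q _ => by rw [Finsupp.smul_apply, smul_eq_mul]
  rw [h1, sum_coeff v _ (some (k - n))]
  · rw [virBasic_some_some, if_pos (by ring)]
    push_cast; ring_nf
  · intro q hq
    match q with
    | none => rw [virBasic_none_left]; rfl
    | some p =>
        rw [virBasic_some_some, if_neg]
        intro hc
        exact hq (by rw [show p = k - n by omega])

lemma brR_none (n : ℤ) (v : Vir) :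
    virBracket v (VirL n) none = v (some (-n)) * veps (-n) := by
  rw [virBracket_L_right, Finsupp.sum_apply]
  have h1 : (v.sum fun p c => (c • virBasic p (some n)) none)
      = v.sum fun p c => c * (virBasic p (some n) none) := by
    exact Finsupp.sum_congr fun q _ => by rw [Finsupp.smul_apply, smul_eq_mul]
  rw [h1, sum_coeff v _ (some (-n))]
  · rw [virBasic_some_none, if_pos (by ring)]
  · intro q hq
    match q with
    | none => rw [virBasic_none_left]; rfl
    | some p =>
        rw [virBasic_some_none, if_neg]
        intro hc
        exact hq (by rw [show p = -n by omega])

lemma virBracket_L_L (m n : ℤ) :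
    virBracket (VirL m) (VirL n) =
      ((m:ℂ) - n) • VirL (m+n) + (if m + n = 0 then veps m else 0) • VirC := by
  rw [virBracket_L_left, VirL, Finsupp.sum_single_index (by simp), one_smul]
  rfl

lemma veps_zero : veps 0 = 0 := by simp [veps]
section Aux

variable (φ : Vir →ₗ[ℂ] Vir)
variable (hφ : ∀ x y : Vir, φ (virBracket x y) =
        (1 / 2 : ℂ) • (virBracket (φ x) y + virBracket x (φ y)))

/-- coefficient of `L k` in `φ (L n)`. -/
noncomputable def cA (n k : ℤ) : ℂ := φ (VirL n) (some k)
/-- coefficient of `c` in `φ (L n)`. -/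
noncomputable def cB (n : ℤ) : ℂ := φ (VirL n) none

include hφ

lemma phiC_some (j : ℤ) : φ VirC (some j) = 0 := by
  have h := hφ (VirL (j+1)) VirC
  simp only [virBracket_C_right, map_zero, zero_add] at h
  have h2 : virBracket (VirL (j+1)) (φ VirC) = 0 := by
    rcases smul_eq_zero.mp h.symm with h' | h'
    · norm_num at h'
    · exact h'
  have h3 : virBracket (VirL (j+1)) (φ VirC) (some (2*j+1)) = 0 := by rw [h2]; rfl
  rw [brL_some] at h3
  rw [show 2*j+1 - (j+1) = j by ring, show 2*(j+1) - (2*j+1) = 1 by ring] at h3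
  simpa using h3

lemma keyEq (m n : ℤ) :
    ((m:ℂ) - n) • φ (VirL (m+n)) + (if m + n = 0 then veps m else 0) • φ VirC
      = (1/2 : ℂ) • (virBracket (φ (VirL m)) (VirL n) + virBracket (VirL m) (φ (VirL n))) := by
  have h := hφ (VirL m) (VirL n)
  rw [virBracket_L_L, map_add, map_smul, map_smul] at h
  exact h

lemma Ssome (m n k : ℤ) : ((m:ℂ) - n) * cA φ (m+n) k
    = (1/2:ℂ) * (cA φ m (k-n) * ((k - 2*n : ℤ):ℂ) + cA φ n (k-m) * ((2*m - k : ℤ):ℂ)) := by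
  have h : (((m:ℂ) - n) • φ (VirL (m+n)) + (if m + n = 0 then veps m else 0) • φ VirC) (some k)
      = ((1/2 : ℂ) • (virBracket (φ (VirL m)) (VirL n) + virBracket (VirL m) (φ (VirL n)))) (some k) := by
    rw [keyEq φ hφ m n]
  rw [Finsupp.add_apply, Finsupp.smul_apply, Finsupp.smul_apply, Finsupp.smul_apply,
    Finsupp.add_apply, brR_some, brL_some, phiC_some φ hφ] at h
  simpa only [smul_eq_mul, mul_zero, add_zero, cA] using h

lemma Snone (m n : ℤ) : ((m:ℂ) - n) * cB φ (m+n) + (if m + n = 0 then veps m else 0) * (φ VirC none)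
    = (1/2:ℂ) * (cA φ m (-n) * veps (-n) + cA φ n (-m) * veps m) := by
  have h : (((m:ℂ) - n) • φ (VirL (m+n)) + (if m + n = 0 then veps m else 0) • φ VirC) none
      = ((1/2 : ℂ) • (virBracket (φ (VirL m)) (VirL n) + virBracket (VirL m) (φ (VirL n)))) none := by
    rw [keyEq φ hφ m n]
  rw [Finsupp.add_apply, Finsupp.smul_apply, Finsupp.smul_apply, Finsupp.smul_apply,
    Finsupp.add_apply, brR_none, brL_none] at h
  simpa only [smul_eq_mul, cA, cB] using h

lemma hshift (n k : ℤ) (hk : k ≠ 2*n) : cA φ n k = cA φ 0 (k - n) := by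
  have h := Ssome φ hφ 0 n k
  rw [zero_add, sub_zero] at h
  push_cast at h
  have hkc : ((k:ℂ) - 2*n) ≠ 0 := by
    intro hc
    exact hk (by exact_mod_cast sub_eq_zero.mp hc)
  apply mul_left_cancel₀ hkc
  linear_combination 2 * h

lemma pairAB (s : ℤ) (hs : s ≠ 0) : cA φ 0 (-s) = 0 ∧ cB φ s = 0 := by
  have h1 := Snone φ hφ 0 s
  rw [zero_add, neg_zero, if_neg hs, zero_mul, add_zero, veps_zero, mul_zero, add_zero] at h1
  -- h1 : ((0:ℂ) - s) * cB φ s = 1/2 * (cA φ 0 (-s) * veps (-s))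
  have h2 := Snone φ hφ (-2*s) (3*s)
  rw [show (-2*s + 3*s : ℤ) = s by ring, if_neg hs, zero_mul, add_zero,
      show (-(-2*s) : ℤ) = 2*s by ring] at h2
  rw [hshift φ hφ (-2*s) (-(3*s)) (by omega), show (-(3*s) - (-2*s) : ℤ) = -s by ring] at h2
  rw [hshift φ hφ (3*s) (2*s) (by omega), show (2*s - 3*s : ℤ) = -s by ring] at h2
  simp only [veps] at h1 h2
  push_cast at h1 h2
  have hsc : ((s:ℂ)) ≠ 0 := Int.cast_ne_zero.mpr hs
  have ha : cA φ 0 (-s) = 0 := by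
    have hk : cA φ 0 (-s) * (s:ℂ)^3 = 0 := by linear_combination (4/5)*h2 - 4*h1
    exact (mul_eq_zero.mp hk).resolve_right (pow_ne_zero _ hsc)
  refine ⟨ha, ?_⟩
  have hb : (s:ℂ) * cB φ s = 0 := by
    linear_combination -h1 + (((s:ℂ)^3 - s)/24) * ha
  exact (mul_eq_zero.mp hb).resolve_left hsc

lemma ha0 (j : ℤ) (hj : j ≠ 0) : cA φ 0 j = 0 := by
  have := (pairAB φ hφ (-j) (by omega)).1
  rwa [neg_neg] at this

lemma cA_diag2 (n : ℤ) (hn : n ≠ 0) : cA φ n (2*n) = 0 := by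
  have main : ∀ n' : ℤ, n' ≠ 0 → n ≠ n' → n - 2*n' ≠ 0 → cA φ n (2*n) = 0 := by
    intro n' h0 h1 h2
    have h := Ssome φ hφ (n - n') n' (2*n)
    rw [show (n - n' + n' : ℤ) = n by ring] at h
    rw [hshift φ hφ (n - n') (2*n - n') (by omega),
        show (2*n - n' - (n - n') : ℤ) = n by ring, ha0 φ hφ n hn] at h
    rw [show (2*n - (n - n') : ℤ) = n + n' by ring,
        hshift φ hφ n' (n + n') (by omega),
        show (n + n' - n' : ℤ) = n by ring, ha0 φ hφ n hn] at h
    rw [zero_mul, zero_mul, add_zero, mul_zero] at h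
    push_cast at h
    have hc : ((n:ℂ) - n' - n') ≠ 0 := by
      intro hc
      apply h2
      have : (n:ℂ) = 2*n' := by linear_combination hc
      exact_mod_cast sub_eq_zero.mpr (by exact_mod_cast this)
    rcases mul_eq_zero.mp h with h' | h'
    · exact absurd (by linear_combination h' : ((n:ℂ) - n' - n') = 0) hc
    · exact h'
  rcases lt_or_ge 0 n with hpos | hle
  · exact main (-1) (by omega) (by omega) (by omega)
  · exact main 1 (by omega) (by omega) (by omega)

lemma cA_full (n k : ℤ) : cA φ n k = if k = n then cA φ 0 0 else 0 := by
  by_cases hn : n = 0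
  · subst hn
    by_cases hk : k = 0
    · subst hk; rw [if_pos rfl]
    · rw [if_neg hk]; exact ha0 φ hφ k hk
  · by_cases hk2 : k = 2*n
    · subst hk2
      rw [if_neg (by omega)]
      exact cA_diag2 φ hφ n hn
    · rw [hshift φ hφ n k hk2]
      by_cases hkn : k = n
      · subst hkn; rw [if_pos rfl, sub_self]
      · rw [if_neg hkn]; exact ha0 φ hφ (k - n) (by omega)

lemma cB_full (n : ℤ) : cB φ n = 0 := by
  by_cases hn : n = 0
  · subst hn
    have h := Snone φ hφ 1 (-1)
    have hv1 : veps 1 = 0 := by norm_num [veps]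
    rw [show ((1:ℤ) + -1) = 0 by ring, show (-(-1) : ℤ) = 1 by ring, if_pos rfl, hv1] at h
    push_cast at h
    linear_combination (1/2) * h
  · exact (pairAB φ hφ n hn).2

lemma muk : φ VirC none = cA φ 0 0 := by
  have h := Snone φ hφ 2 (-2)
  have hv2 : veps 2 = 1/2 := by norm_num [veps]
  rw [show ((2:ℤ) + -2) = 0 by ring, if_pos rfl, show (-(-2) : ℤ) = 2 by ring, hv2,
      cB_full φ hφ, cA_full φ hφ 2 2, cA_full φ hφ (-2) (-2), if_pos rfl, if_pos rfl] at h
  push_cast at h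
  linear_combination 2 * h

end Aux

/-- Every 1/2-derivation of the Virasoro algebra is trivial,
i.e., a scalar multiple of the identity. -/
theorem virasoro_half_derivation_trivial
    (φ : Vir →ₗ[ℂ] Vir)
    (hφ : ∀ x y : Vir, φ (virBracket x y) =
        (1 / 2 : ℂ) • (virBracket (φ x) y + virBracket x (φ y))) :
    ∃ κ : ℂ, φ = κ • LinearMap.id := by
  refine ⟨cA φ 0 0, ?_⟩
  have hsingle : ∀ p : Option ℤ, φ (Finsupp.single p (1:ℂ)) = cA φ 0 0 • Finsupp.single p (1:ℂ) := by
    intro p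
    match p with
    | none =>
        show φ VirC = cA φ 0 0 • VirC
        ext q
        match q with
        | none =>
            rw [Finsupp.smul_apply, muk φ hφ]
            show cA φ 0 0 = cA φ 0 0 • (Finsupp.single (none : Option ℤ) (1:ℂ)) none
            rw [Finsupp.single_eq_same, smul_eq_mul, mul_one]
        | some j =>
            rw [phiC_some φ hφ j, Finsupp.smul_apply]
            show (0:ℂ) = cA φ 0 0 • (Finsupp.single (none : Option ℤ) (1:ℂ)) (some j)
            rw [Finsupp.single_eq_of_ne (by simp), smul_zero]
    | some n =>
        show φ (VirL n) = cA φ 0 0 • VirL n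
        ext q
        match q with
        | none =>
            rw [Finsupp.smul_apply]
            show cB φ n = cA φ 0 0 • (Finsupp.single (some n) (1:ℂ)) none
            rw [cB_full φ hφ, Finsupp.single_eq_of_ne (by simp), smul_zero]
        | some k =>
            rw [Finsupp.smul_apply]
            show cA φ n k = cA φ 0 0 • (Finsupp.single (some n) (1:ℂ)) (some k)
            rw [cA_full φ hφ n k, Finsupp.single_apply]
            by_cases h : k = n
            · subst h; simp
            · rw [if_neg h, if_neg (fun hc => h (Option.some.inj hc).symm), smul_zero]
  apply Finsupp.lhom_ext
  intro p b
  have hb : (Finsupp.single p b : Vir) = b • Finsupp.single p (1:ℂ) := by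
    rw [Finsupp.smul_single, smul_eq_mul, mul_one]
  rw [hb, map_smul, hsingle p, LinearMap.smul_apply, LinearMap.id_apply]
  exact smul_comm b (cA φ 0 0) _
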